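/- In R = k⟦x,y⟧/(x²y), with γ_n = ((x, y^n),(0,−x)) and δ_n = ((xy, y^{n+1}),(0,−xy)), and M = coker γ_n, the ideal xR is NOT contained in the annihilator of stableHom_R(M,M); consequently Ann(coker γ_n) = (x², xy, y^{n+1})R, a proper subideal of (x, y^{n+1})R. -/

import Mathlib

open CategoryTheory IsLocalRing

universe u

variable (R : Type u) [CommRing R]

/-- The submodule of `Hom_R(M,N)` consisting of maps factoring through a projective module. -/
def projStable (M N : Type u) [AddCommGroup M] [Module R M] [AddCommGroup N] [Module R N] :
    Submodule R (M →ₗ[R] N) where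
  carrier := {f | ∃ (P : Type u) (_ : AddCommGroup P) (_ : Module R P)
    (_ : Module.Projective R P) (g : M →ₗ[R] P) (h : P →ₗ[R] N), f = h.comp g}
  zero_mem' := ⟨PUnit, inferInstance, inferInstance, inferInstance, 0, 0, by ext x; simp⟩
  add_mem' := by
    rintro f f' ⟨P, _, _, _, g, h, rfl⟩ ⟨P', _, _, _, g', h', rfl⟩
    exact ⟨P × P', inferInstance, inferInstance, inferInstance, g.prod g',
      h.comp (LinearMap.fst R P P') + h'.comp (LinearMap.snd R P P'), by ext x; simp⟩
  smul_mem' := by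
    rintro r f ⟨P, _, _, _, g, h, rfl⟩
    exact ⟨P, inferInstance, inferInstance, inferInstance, g, r • h, by ext x; simp⟩

/-- The stable hom module `Hom_R(M,N)/P_R(M,N)`. -/
def stableHom (M N : Type u) [AddCommGroup M] [Module R M] [AddCommGroup N] [Module R N] :=
  (M →ₗ[R] N) ⧸ projStable R M N

noncomputable instance (M N : Type u) [AddCommGroup M] [Module R M] [AddCommGroup N]
    [Module R N] : AddCommGroup (stableHom R M N) :=
  inferInstanceAs (AddCommGroup ((M →ₗ[R] N) ⧸ projStable R M N))

noncomputable instance (M N : Type u) [AddCommGroup M] [Module R M] [AddCommGroup N]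
    [Module R N] : Module R (stableHom R M N) :=
  inferInstanceAs (Module R ((M →ₗ[R] N) ⧸ projStable R M N))

/-- `Ann(M)`: the annihilator of the stable endomorphism module of `M`. -/
noncomputable def stAnn (M : Type u) [AddCommGroup M] [Module R M] : Ideal R :=
  Module.annihilator R (stableHom R M M)

/-- `Ext_R^n(M,N)` as an `R`-module. -/
noncomputable abbrev ExtM (n : ℕ) (M : ModuleCat.{u} R) (N : ModuleCat.{u} R) :
    ModuleCat.{u} R :=
  ((Ext R (ModuleCat.{u} R) n).obj (Opposite.op M)).obj N

/-- `ca^n(R)`, the `n`-th cohomology annihilator ideal. -/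
noncomputable def ca (n : ℕ) : Ideal R :=
  ⨅ (m : ℕ) (_ : n ≤ m) (M : ModuleCat.{u} R) (N : ModuleCat.{u} R)
    (_ : Module.Finite R M) (_ : Module.Finite R N),
    Module.annihilator R (ExtM R m M N)


/-- The one-dimensional D-infinity hypersurface `k⟦x,y⟧/(x²y)`. -/
noncomputable abbrev Dinf (k : Type u) [Field k] : Type u :=
  (MvPowerSeries (Fin 2) k) ⧸
    (Ideal.span {(MvPowerSeries.X (0 : Fin 2) : MvPowerSeries (Fin 2) k) ^ 2 *
      MvPowerSeries.X (1 : Fin 2)})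

/-- The image of `x` in `k⟦x,y⟧/(x²y)`. -/
noncomputable def dx (k : Type u) [Field k] : Dinf k :=
  Ideal.Quotient.mk _ (MvPowerSeries.X 0)

/-- The image of `y` in `k⟦x,y⟧/(x²y)`. -/
noncomputable def dy (k : Type u) [Field k] : Dinf k :=
  Ideal.Quotient.mk _ (MvPowerSeries.X 1)


section Aux
set_option synthInstance.maxHeartbeats 1000000
set_option maxHeartbeats 1000000

open MvPowerSeries

namespace StmtAux

section Gen
variable {R} (M : Type u) [AddCommGroup M] [Module R M]

theorem mem_ann_iff_smulid (r : R) :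
    r ∈ Module.annihilator R (stableHom R M M) ↔
      r • (LinearMap.id : M →ₗ[R] M) ∈ projStable R M M := by
  rw [Module.mem_annihilator]
  constructor
  · intro h
    have := h (Submodule.Quotient.mk (p := projStable R M M) LinearMap.id)
    change r • (Submodule.Quotient.mk (p := projStable R M M) LinearMap.id :
      (M →ₗ[R] M) ⧸ projStable R M M) = 0 at this
    rwa [← Submodule.Quotient.mk_smul, Submodule.Quotient.mk_eq_zero] at this
  · intro h z
    obtain ⟨f, rfl⟩ := Submodule.Quotient.mk_surjective (projStable R M M) z
    change r • (Submodule.Quotient.mk f : (M →ₗ[R] M) ⧸ projStable R M M) = 0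
    rw [← Submodule.Quotient.mk_smul, Submodule.Quotient.mk_eq_zero]
    obtain ⟨P, _, _, _, g, h', hfact⟩ := h
    refine ⟨P, inferInstance, inferInstance, inferInstance, g, f.comp h', ?_⟩
    have : r • f = f.comp (r • (LinearMap.id : M →ₗ[R] M)) := by
      ext v; simp
    rw [this, hfact, LinearMap.comp_assoc]
end Gen

section Mat
variable {R}
variable (G : Matrix (Fin 2) (Fin 2) R)

local notation "Q" => ((Fin 2 → R) ⧸ LinearMap.range (Matrix.toLin' G))
local notation "pii" => Submodule.mkQ (LinearMap.range (Matrix.toLin' G))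

theorem fwd (r : R)
    (h : r • (LinearMap.id : Q →ₗ[R] Q) ∈ projStable R Q Q) :
    ∃ S A : Matrix (Fin 2) (Fin 2) R, S * G = 0 ∧ S = r • 1 + G * A := by
  obtain ⟨P, _, _, _, g, h', hfact⟩ := h
  obtain ⟨h₁, hh₁⟩ := Module.projective_lifting_property pii h'
    (Submodule.mkQ_surjective _)
  set S' : (Fin 2 → R) →ₗ[R] (Fin 2 → R) := h₁ ∘ₗ g ∘ₗ pii with hS'
  have key1 : ∀ v, pii (S' v) = r • pii v := by
    intro v
    have e1 : pii (S' v) = h' (g (pii v)) := by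
      rw [hS']; simp only [LinearMap.comp_apply]
      rw [← LinearMap.comp_apply pii h₁, hh₁]
    rw [e1]
    have e2 := LinearMap.congr_fun hfact (pii v)
    simp only [LinearMap.smul_apply, LinearMap.id_apply, LinearMap.comp_apply] at e2
    exact e2.symm
  have key2 : S' ∘ₗ Matrix.toLin' G = 0 := by
    apply LinearMap.ext; intro v
    show h₁ (g (pii (Matrix.toLin' G v))) = 0
    rw [Submodule.mkQ_apply, (Submodule.Quotient.mk_eq_zero _).2 (LinearMap.mem_range_self _ v),
      map_zero, map_zero]
  have hcol : ∀ j : Fin 2, ∃ w : Fin 2 → R,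
      Matrix.toLin' G w = S' (Pi.single j 1) - r • (Pi.single j 1 : Fin 2 → R) := by
    intro j
    have e3 : pii (S' (Pi.single j 1) - r • (Pi.single j 1 : Fin 2 → R)) = 0 := by
      rw [map_sub, key1, map_smul, sub_self]
    rw [Submodule.mkQ_apply, Submodule.Quotient.mk_eq_zero] at e3
    exact e3
  choose w hw using hcol
  refine ⟨LinearMap.toMatrix' S', Matrix.of (fun i j => w j i), ?_, ?_⟩
  · rw [← LinearMap.toMatrix'_toLin' G, ← LinearMap.toMatrix'_comp, key2, map_zero]
  · ext i j
    have e4 := congrFun (hw j) i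
    rw [Matrix.toLin'_apply] at e4
    have hmv : G.mulVec (w j) i = (G * Matrix.of fun i j => w j i) i j := by
      simp [Matrix.mulVec, Matrix.mul_apply, dotProduct]
    have hsingle : (fun j' => if j' = j then 1 else 0 : Fin 2 → R) = Pi.single j 1 := by
      funext m; simp [Pi.single_apply]
    have hS : LinearMap.toMatrix' S' i j = S' (Pi.single j 1) i := by
      rw [LinearMap.toMatrix'_apply]
    rw [hS]
    simp only [Pi.sub_apply, Pi.smul_apply] at e4
    have e5 : S' (Pi.single j 1) i - r • (Pi.single j 1 : Fin 2 → R) i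
        = (G * Matrix.of fun i j => w j i) i j := by
      rw [← e4]; exact hmv
    have : S' (Pi.single j 1) i = r * (Pi.single j 1 : Fin 2 → R) i
        + (G * Matrix.of fun i j => w j i) i j := by
      rw [← e5]; simp [smul_eq_mul]
    rw [this]
    simp only [Matrix.add_apply, Matrix.smul_apply, Matrix.one_apply, Pi.single_apply,
      smul_eq_mul]

theorem bwd (r : R) (S A : Matrix (Fin 2) (Fin 2) R)
    (h1 : S * G = 0) (h2 : S = r • 1 + G * A) :
    r • (LinearMap.id : Q →ₗ[R] Q) ∈ projStable R Q Q := by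
  have hker : LinearMap.range (Matrix.toLin' G) ≤ LinearMap.ker (Matrix.toLin' S) := by
    rintro v ⟨u, rfl⟩
    rw [LinearMap.mem_ker, ← LinearMap.comp_apply, ← Matrix.toLin'_mul, h1]
    simp
  refine ⟨(Fin 2 → R), inferInstance, inferInstance, inferInstance,
    Submodule.liftQ _ (Matrix.toLin' S) hker, pii, ?_⟩
  apply Submodule.linearMap_qext
  apply LinearMap.ext; intro v
  show r • (pii v) = pii (Matrix.toLin' S v)
  have hSv : Matrix.toLin' S v = r • v + Matrix.toLin' G (Matrix.toLin' A v) := by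
    rw [h2, map_add, map_smul, Matrix.toLin'_one, Matrix.toLin'_mul]
    simp
  rw [hSv, map_add, map_smul]
  have hz : pii ((Matrix.toLin' G) ((Matrix.toLin' A) v)) = 0 := by
    rw [Submodule.mkQ_apply, Submodule.Quotient.mk_eq_zero]
    exact LinearMap.mem_range_self _ _
  rw [hz, add_zero]

end Mat

section PS
variable (k : Type u) [Field k]

local notation "XX" => (MvPowerSeries.X (0 : Fin 2) : MvPowerSeries (Fin 2) k)
local notation "YY" => (MvPowerSeries.X (1 : Fin 2) : MvPowerSeries (Fin 2) k)
local notation "mkk" => Ideal.Quotient.mk (Ideal.span {(MvPowerSeries.X (0 : Fin 2) : MvPowerSeries (Fin 2) k) ^ 2 * MvPowerSeries.X (1 : Fin 2)})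

theorem Xne : XX ≠ 0 := by
  intro h
  have := congrArg (coeff (R := k) (Finsupp.single (0 : Fin 2) 1)) h
  rw [coeff_X, if_pos rfl] at this
  simp at this

theorem Xdvd_of_Xdvd_Ypow_mul (m : ℕ) (f : MvPowerSeries (Fin 2) k)
    (h : XX ∣ YY ^ m * f) : XX ∣ f := by
  rw [X_dvd_iff] at h ⊢
  intro e he
  have := h (Finsupp.single (1 : Fin 2) m + e) (by simp [he])
  rwa [X_pow_eq, coeff_add_monomial_mul, one_mul] at this

theorem one_ne_comb' (a b : MvPowerSeries (Fin 2) k) :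
    (1 : MvPowerSeries (Fin 2) k) ≠ XX * a + YY * b := by
  intro h
  have := congrArg (constantCoeff (σ := Fin 2) (R := k)) h
  simp at this

theorem dmk_surj (r : Dinf k) : ∃ f, mkk f = r := Ideal.Quotient.mk_surjective r

theorem R1 (r : Dinf k) (h : dx k * r = 0) : ∃ s, r = dx k * dy k * s := by
  obtain ⟨f, rfl⟩ := dmk_surj k r
  have : mkk (XX * f) = 0 := by rw [map_mul]; exact h
  rw [Ideal.Quotient.eq_zero_iff_mem, Ideal.mem_span_singleton] at this
  obtain ⟨g, hg⟩ := this
  have : XX * f = XX * (XX * MvPowerSeries.X 1 * g) := by rw [hg]; ring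
  have hf := mul_left_cancel₀ (Xne k) this
  exact ⟨mkk g, by rw [hf]; simp [dx, dy, map_mul]⟩

theorem R2 (m : ℕ) (r s : Dinf k) (h : dy k ^ m * r = dx k * s) : ∃ t, r = dx k * t := by
  obtain ⟨f, rfl⟩ := dmk_surj k r
  obtain ⟨g, rfl⟩ := dmk_surj k s
  have : mkk (YY ^ m * f) = mkk (XX * g) := by
    rw [map_mul, map_mul, map_pow]; exact h
  rw [Ideal.Quotient.eq, Ideal.mem_span_singleton] at this
  obtain ⟨h2, hh⟩ := this
  have hdvd : XX ∣ YY ^ m * f := ⟨g + XX * MvPowerSeries.X 1 * h2, by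
    have : YY ^ m * f = XX * g + XX ^ 2 * MvPowerSeries.X 1 * h2 := by
      rw [← hh]; ring
    rw [this]; ring⟩
  obtain ⟨t, ht⟩ := Xdvd_of_Xdvd_Ypow_mul k m f hdvd
  exact ⟨mkk t, by rw [ht]; simp [dx, map_mul]⟩

theorem R3 (a b : Dinf k) : (1 : Dinf k) ≠ dx k * a + dy k * b := by
  intro h
  obtain ⟨A, rfl⟩ := dmk_surj k a
  obtain ⟨B, rfl⟩ := dmk_surj k b
  have : mkk 1 = mkk (XX * A + YY * B) := by
    rw [map_add, map_mul, map_mul]; exact h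
  rw [Ideal.Quotient.eq, Ideal.mem_span_singleton] at this
  obtain ⟨h2, hh⟩ := this
  exact one_ne_comb' k (A + XX * MvPowerSeries.X 1 * h2) B (by
    have : (1 : MvPowerSeries (Fin 2) k) = XX * A + YY * B + XX ^ 2 * MvPowerSeries.X 1 * h2 := by
      rw [← hh]; ring
    rw [this]; ring)

theorem dh0 : dx k ^ 2 * dy k = 0 := by
  rw [dx, dy, ← map_pow, ← map_mul, Ideal.Quotient.eq_zero_iff_mem]
  exact Ideal.subset_span rfl

theorem rowlem (n : ℕ) (a b : Dinf k) (h1 : a * dx k = 0)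
    (h2 : a * dy k ^ n + b * -dx k = 0) :
    ∃ uu vv, a = dx k * dy k * uu ∧ b = dy k ^ (n + 1) * uu + dx k * dy k * vv := by
  obtain ⟨u, hu⟩ := R1 k a (by linear_combination h1)
  obtain ⟨v, hv⟩ := R1 k (b - dy k ^ (n + 1) * u)
    (by linear_combination (-1 : Dinf k) * h2 + dy k ^ n * hu)
  exact ⟨u, v, hu, by linear_combination hv⟩

theorem entries_of_fwd (n : ℕ) (r : Dinf k)
    (h : ∃ S A : Matrix (Fin 2) (Fin 2) (Dinf k),
      S * !![dx k, dy k ^ n; 0, -dx k] = 0 ∧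
      S = r • 1 + !![dx k, dy k ^ n; 0, -dx k] * A) :
    ∃ b d u0 v0 u1 v1 : Dinf k,
      dy k ^ (n + 1) * u0 + dx k * dy k * v0 = dx k * b + dy k ^ n * d ∧
      dy k ^ (n + 1) * u1 + dx k * dy k * v1 = r - dx k * d := by
  obtain ⟨S, A, h1, h2⟩ := h
  have E10 : S 1 0 * dx k = 0 := by
    have := congrFun (congrFun h1 1) 0
    simpa [Matrix.mul_apply, Fin.sum_univ_two] using this
  have E11 : S 1 0 * dy k ^ n + S 1 1 * -dx k = 0 := by
    have := congrFun (congrFun h1 1) 1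
    simp [Matrix.mul_apply, Fin.sum_univ_two] at this
    linear_combination this
  have E00 : S 0 0 * dx k = 0 := by
    have := congrFun (congrFun h1 0) 0
    simpa [Matrix.mul_apply, Fin.sum_univ_two] using this
  have E01 : S 0 0 * dy k ^ n + S 0 1 * -dx k = 0 := by
    have := congrFun (congrFun h1 0) 1
    simp [Matrix.mul_apply, Fin.sum_univ_two] at this
    linear_combination this
  have F11 : S 1 1 = r - dx k * A 1 1 := by
    have := congrFun (congrFun h2 1) 1
    simp [Matrix.mul_apply, Fin.sum_univ_two, Matrix.one_apply, Matrix.vecMul,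
      dotProduct, Matrix.vecHead, Matrix.vecTail] at this
    rw [this]; ring
  have F01 : S 0 1 = dx k * A 0 1 + dy k ^ n * A 1 1 := by
    have := congrFun (congrFun h2 0) 1
    simp [Matrix.mul_apply, Fin.sum_univ_two, Matrix.one_apply, Matrix.vecMul,
      dotProduct, Matrix.vecHead, Matrix.vecTail] at this
    rw [this]
  obtain ⟨u1, v1, hu1, hv1⟩ := rowlem k n (S 1 0) (S 1 1) E10 E11
  obtain ⟨u0, v0, hu0, hv0⟩ := rowlem k n (S 0 0) (S 0 1) E00 E01
  exact ⟨A 0 1, A 1 1, u0, v0, u1, v1,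
    by linear_combination (-1 : Dinf k) * hv0 + F01,
    by linear_combination (-1 : Dinf k) * hv1 + F11⟩

theorem not_x (n : ℕ)
    (h : ∃ S A : Matrix (Fin 2) (Fin 2) (Dinf k),
      S * !![dx k, dy k ^ n; 0, -dx k] = 0 ∧
      S = (dx k) • 1 + !![dx k, dy k ^ n; 0, -dx k] * A) : False := by
  obtain ⟨b, d, u0, v0, u1, v1, hα, hβ⟩ := entries_of_fwd k n (dx k) h
  -- from hβ : y^{n+1} u1 = x (1 - d - y v1)
  obtain ⟨f, hf⟩ := R2 k (n + 1) u1 (1 - d - dy k * v1) (by linear_combination hβ)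
  -- x * (y^{n+1} f + y v1 - 1 + d) = 0
  obtain ⟨w, hw⟩ := R1 k (dy k ^ (n + 1) * f + dy k * v1 - 1 + d)
    (by linear_combination hβ - dy k ^ (n + 1) * hf)
  -- from hα : yn (y u0 - d) = x (b - y v0)
  obtain ⟨e, he⟩ := R2 k n (dy k * u0 - d) (b - dy k * v0) (by linear_combination hα)
  exact R3 k (-e - dy k * w) (dy k ^ n * f + v1 + u0)
    (by linear_combination (-1 : Dinf k) * hw - he)

theorem mem_span3 (n : ℕ) (r : Dinf k)
    (h : ∃ S A : Matrix (Fin 2) (Fin 2) (Dinf k),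
      S * !![dx k, dy k ^ n; 0, -dx k] = 0 ∧
      S = r • 1 + !![dx k, dy k ^ n; 0, -dx k] * A) :
    r ∈ Ideal.span {dx k ^ 2, dx k * dy k, dy k ^ (n + 1)} := by
  obtain ⟨b, d, u0, v0, u1, v1, hα, hβ⟩ := entries_of_fwd k n r h
  obtain ⟨e, he⟩ := R2 k n (dy k * u0 - d) (b - dy k * v0) (by linear_combination hα)
  have hr : r = dx k ^ 2 * (-e) + dx k * dy k * (u0 + v1) + dy k ^ (n + 1) * u1 := by
    linear_combination (-1 : Dinf k) * hβ - dx k * he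
  rw [hr]
  refine Ideal.add_mem _ (Ideal.add_mem _ ?_ ?_) ?_
  · exact Ideal.mul_mem_right _ _ (Ideal.subset_span (by simp))
  · exact Ideal.mul_mem_right _ _ (Ideal.subset_span (by simp))
  · exact Ideal.mul_mem_right _ _ (Ideal.subset_span (by simp))

theorem x_not_mem_span3 (n : ℕ) (hn : 1 ≤ n) :
    dx k ∉ Ideal.span {dx k ^ 2, dx k * dy k, dy k ^ (n + 1)} := by
  intro h
  rw [Ideal.mem_span_insert] at h
  obtain ⟨a, z, hz, hx⟩ := h
  rw [Ideal.mem_span_insert] at hz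
  obtain ⟨b, z', hz', hz2⟩ := hz
  rw [Ideal.mem_span_singleton] at hz'
  obtain ⟨c, hc⟩ := hz'
  rw [hz2, hc] at hx
  -- hx : dx = a • dx^2 + (b • (dx*dy) + dy^{n+1}*c)
  -- already in mul form
  -- y^{n+1} c = x (1 - a x - b y)
  obtain ⟨t, ht⟩ := R2 k (n + 1) c (1 - a * dx k - b * dy k) (by linear_combination (-1 : Dinf k) * hx)
  obtain ⟨w, hw⟩ := R1 k (1 - a * dx k - b * dy k - dy k ^ (n + 1) * t)
    (by linear_combination hx + dy k ^ (n + 1) * ht)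
  exact R3 k (a + dy k * w) (b + dy k ^ n * t) (by linear_combination hw)

end PS

end StmtAux
end Aux

set_option synthInstance.maxHeartbeats 4000000
set_option maxHeartbeats 4000000

/-- In `R = k⟦x,y⟧/(x²y)` (char k ≠ 2), with `γₙ = ((x, yⁿ),(0,-x))`
and `M = coker γₙ` (`n ≥ 1`), the ideal `xR` is NOT contained in the annihilator of
`stableHom(M,M)`; consequently `Ann(coker γₙ) = (x², xy, y^{n+1})R`, a proper subideal
of `(x, y^{n+1})R`. -/
theorem stmt10 (k : Type u) [Field k] (hchar : ringChar k ≠ 2) (n : ℕ) (hn : 1 ≤ n) :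
    ¬ Ideal.span {dx k} ≤
        stAnn (Dinf k) ((Fin 2 → Dinf k) ⧸
          LinearMap.range (Matrix.toLin' !![dx k, dy k ^ n; 0, -dx k])) ∧
    stAnn (Dinf k) ((Fin 2 → Dinf k) ⧸
        LinearMap.range (Matrix.toLin' !![dx k, dy k ^ n; 0, -dx k]))
      = Ideal.span {dx k ^ 2, dx k * dy k, dy k ^ (n + 1)} ∧
    Ideal.span {dx k ^ 2, dx k * dy k, dy k ^ (n + 1)}
      < Ideal.span {dx k, dy k ^ (n + 1)} := by
  classical
  set G : Matrix (Fin 2) (Fin 2) (Dinf k) := !![dx k, dy k ^ n; 0, -dx k] with hG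
  have h0 := StmtAux.dh0 k
  refine ⟨?_, ?_, ?_⟩
  · -- x R not contained in the stable annihilator
    intro hle
    have hx : dx k ∈ Module.annihilator (Dinf k)
        (stableHom (Dinf k) ((Fin 2 → Dinf k) ⧸ LinearMap.range (Matrix.toLin' G))
          ((Fin 2 → Dinf k) ⧸ LinearMap.range (Matrix.toLin' G))) :=
      hle (Ideal.subset_span rfl)
    exact StmtAux.not_x k n
      (StmtAux.fwd G (dx k) ((StmtAux.mem_ann_iff_smulid _ (dx k)).1 hx))
  · -- the stable annihilator equals (x², xy, y^{n+1})
    apply le_antisymm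
    · intro r hr
      exact StmtAux.mem_span3 k n r
        (StmtAux.fwd G r ((StmtAux.mem_ann_iff_smulid _ r).1 hr))
    · rw [Ideal.span_le]
      rintro s hs
      simp only [Set.mem_insert_iff, Set.mem_singleton_iff] at hs
      rcases hs with rfl | rfl | rfl
      · -- x²
        refine (StmtAux.mem_ann_iff_smulid _ _).2 (StmtAux.bwd G _ 0 (-G) ?_ ?_)
        · rw [Matrix.zero_mul]
        · ext i j
          fin_cases i <;> fin_cases j <;>
            simp [hG, Matrix.mul_apply, Fin.sum_univ_two, Matrix.one_apply] <;> ring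
      · -- xy
        refine (StmtAux.mem_ann_iff_smulid _ _).2 (StmtAux.bwd G _
          !![dx k * dy k, dy k ^ (n + 1); 0, 0] !![0, 0; 0, dy k] ?_ ?_)
        · ext i j
          fin_cases i <;> fin_cases j <;>
            simp [hG, Matrix.mul_apply, Fin.sum_univ_two] <;>
            first
            | ring1
            | linear_combination h0
            | linear_combination (-1 : Dinf k) * h0
        · ext i j
          fin_cases i <;> fin_cases j <;>
            simp [hG, Matrix.mul_apply, Fin.sum_univ_two, Matrix.one_apply] <;> ring
      · -- y^{n+1}
        refine (StmtAux.mem_ann_iff_smulid _ _).2 (StmtAux.bwd G _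
          !![0, 0; dx k * dy k, dy k ^ (n + 1)] !![0, 0; -dy k, 0] ?_ ?_)
        · ext i j
          fin_cases i <;> fin_cases j <;>
            simp [hG, Matrix.mul_apply, Fin.sum_univ_two] <;>
            first
            | ring1
            | linear_combination h0
            | linear_combination (-1 : Dinf k) * h0
        · ext i j
          fin_cases i <;> fin_cases j <;>
            simp [hG, Matrix.mul_apply, Fin.sum_univ_two, Matrix.one_apply] <;> ring
  · -- proper inclusion
    have hdx : dx k ∈ Ideal.span {dx k, dy k ^ (n + 1)} := Ideal.subset_span (by simp)
    refine lt_of_le_of_ne ?_ ?_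
    · rw [Ideal.span_le]
      rintro s hs
      simp only [Set.mem_insert_iff, Set.mem_singleton_iff] at hs
      rcases hs with rfl | rfl | rfl
      · have := Ideal.mul_mem_left (Ideal.span {dx k, dy k ^ (n + 1)}) (dx k) hdx
        simpa [sq] using this
      · exact Ideal.mul_mem_right _ _ hdx
      · exact Ideal.subset_span (by simp)
    · intro heq
      exact StmtAux.x_not_mem_span3 k n hn (heq.symm ▸ hdx)
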